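/- (Lyapunov inequality for the formation error.) Under the error dynamics ė = (A + B K₁) e − X B₀ u₀ + (B + ΔB) d + ΔA x + ΔB u₁ + (B + ΔB)(u₂ + u₃) − K₄ (μ̇₂/μ₂) e, with P symmetric positive definite solving Aᵀ P + P A − P B Bᵀ P + I = 0, K₁ = −Bᵀ P, matched uncertainties ΔA = B N(t), ΔB = B M(t) with ‖N(t)‖ ≤ N̄ and ‖M(t)‖ ≤ M̄ < 1, bounds ‖d(t)‖ ≤ d̄, ‖u₀(t)‖ ≤ ū, X B₀ = B F, and robust terms u₂ = −ρ₁ s/‖s‖ − ρ₂ ‖x‖ s/‖s‖ − ρ₃ ‖F‖ s/‖s‖ and u₃ = −ρ₄ (‖K₁ x‖ + ‖K₂ ξ‖ + ‖K₃ h̃‖ + K₄ ‖(μ̇₂/μ₂) B⁺ e‖) s/‖s‖ where s = Bᵀ P e ≠ 0, and with gains ρ₁ ≥ (1 + M̄) d̄/(1 − M̄), ρ₂ ≥ N̄/(1 − M̄), ρ₃ ≥ ū/(1 − M̄), ρ₄ ≥ M̄/(1 − M̄), the Lyapunov function V̄(t) = (1/2) e(t)ᵀ P e(t) satisfies V̄̇(t)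 ≤ −V̄(t)/λ_max(P) − 2 K₄ (μ̇₂(t)/μ₂(t)) V̄(t). -/

import Mathlib

open Matrix Set Filter
open scoped Matrix.Norms.L2Operator

/-- Euclidean norm of a finitely-indexed real vector. -/
noncomputable def vecEnorm {ι : Type*} [Fintype ι] (x : ι → ℝ) : ℝ :=
  ‖(EuclideanSpace.equiv ι ℝ).symm x‖

/-- The time-scaling function μ with parameters v, T and initial time t₀. -/
noncomputable def tsf (v T t₀ : ℝ) (t : ℝ) : ℝ :=
  if t < T + t₀ then T ^ v / (T + t₀ - t) ^ v else 1

namespace FormAux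

variable {ι κ : Type*} [Fintype ι] [Fintype κ]

lemma dot_eq_inner (x y : ι → ℝ) :
    x ⬝ᵥ y = inner ℝ ((EuclideanSpace.equiv ι ℝ).symm x) ((EuclideanSpace.equiv ι ℝ).symm y) := by
  simp [PiLp.inner_apply, RCLike.inner_apply, dotProduct, mul_comm]

lemma enorm_nonneg (x : ι → ℝ) : 0 ≤ vecEnorm x := norm_nonneg _

lemma dot_self_eq (x : ι → ℝ) : x ⬝ᵥ x = vecEnorm x ^ 2 := by
  rw [dot_eq_inner, vecEnorm, real_inner_self_eq_norm_sq]

lemma dot_le (x y : ι → ℝ) : x ⬝ᵥ y ≤ vecEnorm x * vecEnorm y := by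
  rw [dot_eq_inner]; exact real_inner_le_norm _ _

lemma neg_dot_le (x y : ι → ℝ) : -(vecEnorm x * vecEnorm y) ≤ x ⬝ᵥ y := by
  have := dot_le x (-y)
  have hy : vecEnorm (-y) = vecEnorm y := by simp [vecEnorm]
  rw [hy] at this
  have : x ⬝ᵥ (-y) ≤ vecEnorm x * vecEnorm y := this
  simpa [dotProduct_neg] using neg_le_neg this

lemma enorm_mulVec_le [DecidableEq ι] [DecidableEq κ] (M : Matrix ι κ ℝ) (x : κ → ℝ) :
    vecEnorm (M *ᵥ x) ≤ ‖M‖ * vecEnorm x := M.l2_opNorm_mulVec ((EuclideanSpace.equiv κ ℝ).symm x)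

lemma enorm_add_le (x y : ι → ℝ) : vecEnorm (x + y) ≤ vecEnorm x + vecEnorm y := by
  simpa [vecEnorm] using
    norm_add_le ((EuclideanSpace.equiv ι ℝ).symm x) ((EuclideanSpace.equiv ι ℝ).symm y)

lemma enorm_smul (c : ℝ) (x : ι → ℝ) : vecEnorm (c • x) = |c| * vecEnorm x := by
  simp only [vecEnorm]
  rw [show (EuclideanSpace.equiv ι ℝ).symm (c • x) = c • (EuclideanSpace.equiv ι ℝ).symm x from rfl,
    norm_smul]
  simp

lemma enorm_neg (x : ι → ℝ) : vecEnorm (-x) = vecEnorm x := by simp [vecEnorm]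

lemma enorm_sub_le (x y : ι → ℝ) : vecEnorm (x - y) ≤ vecEnorm x + vecEnorm y := by
  rw [sub_eq_add_neg]
  exact (enorm_add_le x (-y)).trans (by rw [enorm_neg])

lemma enorm_pos_of_ne (x : ι → ℝ) (hx : x ≠ 0) : 0 < vecEnorm x := by
  rw [vecEnorm]
  simp only [norm_pos_iff]
  intro h
  exact hx (by simpa using congrArg (EuclideanSpace.equiv ι ℝ) h)

lemma dot_mulVec_comm (u : ι → ℝ) (M : Matrix ι κ ℝ) (w : κ → ℝ) :
    u ⬝ᵥ (M *ᵥ w) = (Mᵀ *ᵥ u) ⬝ᵥ w := by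
  rw [dotProduct_mulVec, ← Matrix.mulVec_transpose]

lemma rayleigh {n : ℕ} {P : Matrix (Fin n) (Fin n) ℝ} (hP : P.IsHermitian)
    (u : Fin n → ℝ) :
    u ⬝ᵥ (P *ᵥ u) ≤ (⨆ i, hP.eigenvalues i) * (u ⬝ᵥ u) := by
  classical
  set V : Matrix (Fin n) (Fin n) ℝ := (hP.eigenvectorUnitary : Matrix (Fin n) (Fin n) ℝ) with hV
  have hstar : star V = Vᵀ := by
    rw [Matrix.star_eq_conjTranspose, Matrix.conjTranspose_eq_transpose_of_trivial]
  have hVVs : V * Vᵀ = 1 := by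
    rw [← hstar]; exact (Matrix.mem_unitaryGroup_iff).mp hP.eigenvectorUnitary.2
  set w : Fin n → ℝ := Vᵀ *ᵥ u with hw
  have hdiag : P = V * Matrix.diagonal hP.eigenvalues * Vᵀ := by
    have := hP.spectral_theorem
    rw [Unitary.conjStarAlgAut_apply] at this
    change P = V * _ * star V at this
    rw [hstar] at this
    simpa using this
  have h1 : u ⬝ᵥ (P *ᵥ u) = w ⬝ᵥ (Matrix.diagonal hP.eigenvalues *ᵥ w) := by
    conv_lhs => rw [hdiag]
    rw [← mulVec_mulVec, ← mulVec_mulVec, dot_mulVec_comm]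
  have h2 : u ⬝ᵥ u = w ⬝ᵥ w := by
    rw [hw, ← dot_mulVec_comm, mulVec_mulVec, hVVs, one_mulVec]
  rw [h1, h2]
  have hbdd : BddAbove (Set.range hP.eigenvalues) := Set.Finite.bddAbove (Set.finite_range _)
  have hsum : w ⬝ᵥ (Matrix.diagonal hP.eigenvalues *ᵥ w)
      = ∑ i, hP.eigenvalues i * (w i * w i) := by
    simp only [dotProduct, mulVec_diagonal]
    exact Finset.sum_congr rfl fun i _ => by ring
  rw [hsum, dotProduct, Finset.mul_sum]
  refine Finset.sum_le_sum fun i _ => ?_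
  exact mul_le_mul_of_nonneg_right (le_ciSup hbdd i) (mul_self_nonneg _)

lemma hasDerivAt_quad {n : ℕ} (P : Matrix (Fin n) (Fin n) ℝ) (e : ℝ → Fin n → ℝ)
    (e' : Fin n → ℝ) (t : ℝ) (h : HasDerivAt e e' t) :
    HasDerivAt (fun τ => e τ ⬝ᵥ (P *ᵥ e τ)) (e' ⬝ᵥ (P *ᵥ e t) + e t ⬝ᵥ (P *ᵥ e')) t := by
  have hi : ∀ i, HasDerivAt (fun τ => e τ i) (e' i) t := fun i => hasDerivAt_pi.1 h i
  have hinner : ∀ i, HasDerivAt (fun τ => (P *ᵥ e τ) i) ((P *ᵥ e') i) t := by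
    intro i
    simp only [mulVec, dotProduct]
    exact HasDerivAt.fun_sum fun j _ => (hi j).const_mul (P i j)
  have key := HasDerivAt.fun_sum (u := Finset.univ)
    (fun i (_ : i ∈ Finset.univ) => (hi i).mul (hinner i))
  simpa [dotProduct, Finset.sum_add_distrib] using key

end FormAux

set_option maxHeartbeats 1000000

/-- Lyapunov inequality for the formation error: under the error dynamics with the robust
controller and the stated gain conditions, V̄(t) = ½ e(t)ᵀ P e(t) satisfies
V̄̇(t) ≤ −V̄(t)/λ_max(P) − 2K₄(μ̇₂/μ₂)V̄(t). -/
theorem formation_error_lyapunov_inequality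
    (n m n₀ m₀ nh : ℕ) (hn : 0 < n)
    (A : Matrix (Fin n) (Fin n) ℝ) (B : Matrix (Fin n) (Fin m) ℝ)
    (ΔA : ℝ → Matrix (Fin n) (Fin n) ℝ) (ΔB : ℝ → Matrix (Fin n) (Fin m) ℝ)
    (Nmat : ℝ → Matrix (Fin m) (Fin n) ℝ) (Mmat : ℝ → Matrix (Fin m) (Fin m) ℝ)
    (hΔA : ∀ τ, ΔA τ = B * Nmat τ) (hΔB : ∀ τ, ΔB τ = B * Mmat τ)
    (Nbar Mbar dbar ubar : ℝ) (hMbar0 : 0 ≤ Mbar) (hMbar1 : Mbar < 1)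
    (hNb : ∀ τ, ‖Nmat τ‖ ≤ Nbar) (hMb : ∀ τ, ‖Mmat τ‖ ≤ Mbar)
    (A₀ : Matrix (Fin n₀) (Fin n₀) ℝ) (B₀ : Matrix (Fin n₀) (Fin m₀) ℝ)
    (Ah : Matrix (Fin nh) (Fin nh) ℝ)
    (X : Matrix (Fin n) (Fin n₀) ℝ) (U : Matrix (Fin m) (Fin n₀) ℝ)
    (hreg : X * A₀ = A * X + B * U)
    (Xh : Matrix (Fin n) (Fin nh) ℝ) (Uh : Matrix (Fin m) (Fin nh) ℝ)
    (hregh : Xh * Ah = A * Xh + B * Uh)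
    (F : Matrix (Fin m) (Fin m₀) ℝ) (hF : X * B₀ = B * F)
    (Bp : Matrix (Fin m) (Fin n) ℝ) (hBp : B * Bp = 1)
    -- Riccati equation and gain matrices
    (P : Matrix (Fin n) (Fin n) ℝ) (hP : P.PosDef)
    (hRic : Aᵀ * P + P * A - P * B * Bᵀ * P + 1 = 0)
    (K₁ : Matrix (Fin m) (Fin n) ℝ) (hK₁ : K₁ = -(Bᵀ * P))
    (K₂ : Matrix (Fin m) (Fin n₀) ℝ) (hK₂ : K₂ = U - K₁ * X)
    (K₃ : Matrix (Fin m) (Fin nh) ℝ) (hK₃ : K₃ = Uh - K₁ * Xh)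
    (K₄ : ℝ) (hK₄ : 0 < K₄)
    -- robust gains
    (ρ₁ ρ₂ ρ₃ ρ₄ : ℝ)
    (hρ₁ : (1 + Mbar) * dbar / (1 - Mbar) ≤ ρ₁)
    (hρ₂ : Nbar / (1 - Mbar) ≤ ρ₂)
    (hρ₃ : ubar / (1 - Mbar) ≤ ρ₃)
    (hρ₄ : Mbar / (1 - Mbar) ≤ ρ₄)
    -- time-scaling function parameters (μ₂ = tsf v T₂ T₁)
    (v T₁ T₂ : ℝ) (hv : 2 < v) (hT₂ : 0 < T₂)
    -- signals and their bounds
    (x : ℝ → Fin n → ℝ) (x₀ : ℝ → Fin n₀ → ℝ) (z : ℝ → Fin nh → ℝ)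
    (u₀ : ℝ → Fin m₀ → ℝ) (d : ℝ → Fin m → ℝ)
    (hdb : ∀ τ, vecEnorm (d τ) ≤ dbar) (hub : ∀ τ, vecEnorm (u₀ τ) ≤ ubar)
    (ξ : ℝ → Fin n₀ → ℝ) (hξ : ξ = x₀)
    (e : ℝ → Fin n → ℝ) (he : ∀ τ, e τ = x τ - X *ᵥ x₀ τ - Xh *ᵥ z τ)
    -- the controller at time t, with s = Bᵀ P e(t) ≠ 0
    (t : ℝ) (s : Fin m → ℝ) (hs : s = Bᵀ *ᵥ (P *ᵥ e t)) (hs0 : s ≠ 0)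
    (u₁t u₂t u₃t : Fin m → ℝ)
    (hu₁ : u₁t = K₁ *ᵥ x t + K₂ *ᵥ ξ t + K₃ *ᵥ z t
        - (K₄ * (deriv (tsf v T₂ T₁) t / tsf v T₂ T₁ t)) • (Bp *ᵥ e t))
    (hu₂ : u₂t = -ρ₁ • ((vecEnorm s)⁻¹ • s) - (ρ₂ * vecEnorm (x t)) • ((vecEnorm s)⁻¹ • s)
        - (ρ₃ * ‖F‖) • ((vecEnorm s)⁻¹ • s))
    (hu₃ : u₃t = -(ρ₄ * (vecEnorm (K₁ *ᵥ x t) + vecEnorm (K₂ *ᵥ ξ t) + vecEnorm (K₃ *ᵥ z t)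
        + K₄ * vecEnorm ((deriv (tsf v T₂ T₁) t / tsf v T₂ T₁ t) • (Bp *ᵥ e t))))
          • ((vecEnorm s)⁻¹ • s))
    -- the error dynamics at time t
    (hedyn : HasDerivAt e
      ((A + B * K₁) *ᵥ e t - (X * B₀) *ᵥ u₀ t + (B + ΔB t) *ᵥ d t
        + ΔA t *ᵥ x t + ΔB t *ᵥ u₁t + (B + ΔB t) *ᵥ (u₂t + u₃t)
        - (K₄ * (deriv (tsf v T₂ T₁) t / tsf v T₂ T₁ t)) • e t) t) :
    deriv (fun τ => (1 / 2) * (e τ ⬝ᵥ (P *ᵥ e τ))) t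
      ≤ -((1 / 2) * (e t ⬝ᵥ (P *ᵥ e t))) / (⨆ j, hP.1.eigenvalues j)
        - 2 * K₄ * (deriv (tsf v T₂ T₁) t / tsf v T₂ T₁ t)
            * ((1 / 2) * (e t ⬝ᵥ (P *ᵥ e t))) := by
  classical
  have hFn : Nonempty (Fin n) := ⟨⟨0, hn⟩⟩
  set r : ℝ := deriv (tsf v T₂ T₁) t / tsf v T₂ T₁ t with hr
  set ed : Fin n → ℝ := (A + B * K₁) *ᵥ e t - (X * B₀) *ᵥ u₀ t + (B + ΔB t) *ᵥ d t
      + ΔA t *ᵥ x t + ΔB t *ᵥ u₁t + (B + ΔB t) *ᵥ (u₂t + u₃t)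
      - (K₄ * r) • e t with hed
  -- derivative of the Lyapunov function
  have hPt : Pᵀ = P := (Matrix.conjTranspose_eq_transpose_of_trivial P).symm.trans hP.1
  have hsym : ∀ u w : Fin n → ℝ, u ⬝ᵥ (P *ᵥ w) = w ⬝ᵥ (P *ᵥ u) := by
    intro u w
    rw [FormAux.dot_mulVec_comm, hPt, dotProduct_comm]
  have hVd : deriv (fun τ => (1 / 2 : ℝ) * (e τ ⬝ᵥ (P *ᵥ e τ))) t
      = e t ⬝ᵥ (P *ᵥ ed) := by
    have hq := (FormAux.hasDerivAt_quad P e ed t hedyn).const_mul (1 / 2 : ℝ)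
    rw [hq.deriv, hsym ed (e t)]
    ring
  rw [hVd]
  -- key reduction to s
  have hkey : ∀ w : Fin m → ℝ, e t ⬝ᵥ (P *ᵥ (B *ᵥ w)) = s ⬝ᵥ w := by
    intro w
    rw [FormAux.dot_mulVec_comm, hPt, FormAux.dot_mulVec_comm, hs]
  -- quadratic term via the Riccati equation
  have hRic' : Aᵀ * P + P * A = P * B * Bᵀ * P - 1 := by
    rw [← sub_eq_zero, ← hRic]; abel
  have hBBs : e t ⬝ᵥ ((P * B * Bᵀ * P) *ᵥ e t) = s ⬝ᵥ s := by
    have h1 : (P * B * Bᵀ * P) *ᵥ e t = P *ᵥ (B *ᵥ (Bᵀ *ᵥ (P *ᵥ e t))) := by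
      simp [mulVec_mulVec, Matrix.mul_assoc]
    rw [h1, hkey, ← hs]
  have hPA : e t ⬝ᵥ (P *ᵥ (A *ᵥ e t)) = (1/2) * (s ⬝ᵥ s - e t ⬝ᵥ e t) := by
    have hAP : e t ⬝ᵥ ((Aᵀ * P) *ᵥ e t) = e t ⬝ᵥ ((P * A) *ᵥ e t) := by
      rw [FormAux.dot_mulVec_comm, Matrix.transpose_mul, Matrix.transpose_transpose, hPt,
        dotProduct_comm]
    have hsum2 : e t ⬝ᵥ ((Aᵀ * P + P * A) *ᵥ e t) = s ⬝ᵥ s - e t ⬝ᵥ e t := by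
      rw [hRic', Matrix.sub_mulVec, dotProduct_sub, hBBs, Matrix.one_mulVec]
    rw [Matrix.add_mulVec, dotProduct_add, hAP] at hsum2
    rw [mulVec_mulVec]
    linarith
  have hK1e : K₁ *ᵥ e t = -s := by
    rw [hK₁, Matrix.neg_mulVec, ← mulVec_mulVec, hs]
  have hd1 : e t ⬝ᵥ (P *ᵥ ((A + B * K₁) *ᵥ e t))
      = (1/2) * (s ⬝ᵥ s - e t ⬝ᵥ e t) - s ⬝ᵥ s := by
    rw [Matrix.add_mulVec, mulVec_add, dotProduct_add, hPA]
    have h2 : e t ⬝ᵥ (P *ᵥ ((B * K₁) *ᵥ e t)) = -(s ⬝ᵥ s) := by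
      rw [← mulVec_mulVec, hkey, hK1e, dotProduct_neg]
    rw [h2]; ring
  have hd2 : e t ⬝ᵥ (P *ᵥ ((X * B₀) *ᵥ u₀ t)) = s ⬝ᵥ (F *ᵥ u₀ t) := by
    rw [hF, ← mulVec_mulVec, hkey]
  have hBM : ∀ w : Fin m → ℝ,
      e t ⬝ᵥ (P *ᵥ ((B + ΔB t) *ᵥ w)) = s ⬝ᵥ w + s ⬝ᵥ (Mmat t *ᵥ w) := by
    intro w
    rw [hΔB t, Matrix.add_mulVec, ← mulVec_mulVec, mulVec_add, dotProduct_add, hkey, hkey]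
  have hd4 : e t ⬝ᵥ (P *ᵥ (ΔA t *ᵥ x t)) = s ⬝ᵥ (Nmat t *ᵥ x t) := by
    rw [hΔA t, ← mulVec_mulVec, hkey]
  have hd5 : e t ⬝ᵥ (P *ᵥ (ΔB t *ᵥ u₁t)) = s ⬝ᵥ (Mmat t *ᵥ u₁t) := by
    rw [hΔB t, ← mulVec_mulVec, hkey]
  have hDval : e t ⬝ᵥ (P *ᵥ ed)
      = ((1/2) * (s ⬝ᵥ s - e t ⬝ᵥ e t) - s ⬝ᵥ s)
        - s ⬝ᵥ (F *ᵥ u₀ t)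
        + (s ⬝ᵥ d t + s ⬝ᵥ (Mmat t *ᵥ d t))
        + s ⬝ᵥ (Nmat t *ᵥ x t)
        + s ⬝ᵥ (Mmat t *ᵥ u₁t)
        + (s ⬝ᵥ (u₂t + u₃t) + s ⬝ᵥ (Mmat t *ᵥ (u₂t + u₃t)))
        - (K₄ * r) * (e t ⬝ᵥ (P *ᵥ e t)) := by
    rw [hed]
    simp only [mulVec_add, mulVec_sub, Matrix.mulVec_smul, dotProduct_add, dotProduct_sub,
      dotProduct_smul, smul_eq_mul]
    rw [hd1, hd2, hBM (d t), hd4, hd5, hBM u₂t, hBM u₃t]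
    ring
  -- nonnegativity facts
  set σ := vecEnorm s with hσ
  have hσpos : 0 < σ := FormAux.enorm_pos_of_ne s hs0
  set nx := vecEnorm (x t) with hnx
  set W := vecEnorm (K₁ *ᵥ x t) + vecEnorm (K₂ *ᵥ ξ t) + vecEnorm (K₃ *ᵥ z t)
      + K₄ * vecEnorm (r • (Bp *ᵥ e t)) with hW
  have hnx0 : 0 ≤ nx := FormAux.enorm_nonneg _
  have hW0 : 0 ≤ W := by
    have h1 := FormAux.enorm_nonneg (K₁ *ᵥ x t)
    have h2 := FormAux.enorm_nonneg (K₂ *ᵥ ξ t)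
    have h3 := FormAux.enorm_nonneg (K₃ *ᵥ z t)
    have h4 := FormAux.enorm_nonneg (r • (Bp *ᵥ e t))
    have h4' := mul_nonneg hK₄.le h4
    rw [hW]; linarith only [h1, h2, h3, h4']
  have hdbar0 : 0 ≤ dbar := (FormAux.enorm_nonneg (d t)).trans (hdb t)
  have hubar0 : 0 ≤ ubar := (FormAux.enorm_nonneg (u₀ t)).trans (hub t)
  have hNbar0 : 0 ≤ Nbar := (norm_nonneg (Nmat t)).trans (hNb t)
  have h1M : (0:ℝ) < 1 - Mbar := by linarith
  have hρ₁' : (1 + Mbar) * dbar ≤ ρ₁ * (1 - Mbar) := by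
    rw [div_le_iff₀ h1M] at hρ₁; linarith
  have hρ₂' : Nbar ≤ ρ₂ * (1 - Mbar) := by
    rw [div_le_iff₀ h1M] at hρ₂; linarith
  have hρ₃' : ubar ≤ ρ₃ * (1 - Mbar) := by
    rw [div_le_iff₀ h1M] at hρ₃; linarith
  have hρ₄' : Mbar ≤ ρ₄ * (1 - Mbar) := by
    rw [div_le_iff₀ h1M] at hρ₄; linarith
  have hρ₁0 : 0 ≤ ρ₁ := by
    rcases le_or_gt 0 ρ₁ with h | h
    · exact h
    · have h2 : ρ₁ * (1 - Mbar) < 0 := mul_neg_of_neg_of_pos h h1M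
      have h3 : (0:ℝ) ≤ (1 + Mbar) * dbar := mul_nonneg (by linarith only [hMbar0]) hdbar0
      linarith only [h2, h3, hρ₁']
  have hρ₂0 : 0 ≤ ρ₂ := by
    rcases le_or_gt 0 ρ₂ with h | h
    · exact h
    · have h2 : ρ₂ * (1 - Mbar) < 0 := mul_neg_of_neg_of_pos h h1M
      linarith only [h2, hρ₂', hNbar0]
  have hρ₃0 : 0 ≤ ρ₃ := by
    rcases le_or_gt 0 ρ₃ with h | h
    · exact h
    · have h2 : ρ₃ * (1 - Mbar) < 0 := mul_neg_of_neg_of_pos h h1M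
      linarith only [h2, hρ₃', hubar0]
  have hρ₄0 : 0 ≤ ρ₄ := by
    rcases le_or_gt 0 ρ₄ with h | h
    · exact h
    · have h2 : ρ₄ * (1 - Mbar) < 0 := mul_neg_of_neg_of_pos h h1M
      linarith only [h2, hρ₄', hMbar0]
  have hFnorm : 0 ≤ ‖F‖ := norm_nonneg F
  -- bounds on the matched terms
  have hb2 : -(s ⬝ᵥ (F *ᵥ u₀ t)) ≤ σ * (‖F‖ * ubar) := by
    have h := FormAux.neg_dot_le s (F *ᵥ u₀ t)
    have h2 : vecEnorm (F *ᵥ u₀ t) ≤ ‖F‖ * ubar :=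
      (FormAux.enorm_mulVec_le F (u₀ t)).trans (mul_le_mul_of_nonneg_left (hub t) hFnorm)
    have h3 := mul_le_mul_of_nonneg_left h2 hσpos.le
    linarith only [h, h3]
  have hb3 : s ⬝ᵥ d t + s ⬝ᵥ (Mmat t *ᵥ d t) ≤ σ * ((1 + Mbar) * dbar) := by
    have h1 := FormAux.dot_le s (d t)
    have h2 := FormAux.dot_le s (Mmat t *ᵥ d t)
    have h3 : vecEnorm (Mmat t *ᵥ d t) ≤ Mbar * dbar :=
      (FormAux.enorm_mulVec_le _ _).trans
        (mul_le_mul (hMb t) (hdb t) (FormAux.enorm_nonneg _) hMbar0)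
    have h4 := mul_le_mul_of_nonneg_left (hdb t) hσpos.le
    have h5 := mul_le_mul_of_nonneg_left h3 hσpos.le
    linarith only [h1, h2, h4, h5]
  have hb4 : s ⬝ᵥ (Nmat t *ᵥ x t) ≤ σ * (Nbar * nx) := by
    have h1 := FormAux.dot_le s (Nmat t *ᵥ x t)
    have h2 : vecEnorm (Nmat t *ᵥ x t) ≤ Nbar * nx :=
      (FormAux.enorm_mulVec_le _ _).trans (mul_le_mul_of_nonneg_right (hNb t) hnx0)
    have h3 := mul_le_mul_of_nonneg_left h2 hσpos.le
    linarith only [h1, h3]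
  have hu₁W : vecEnorm u₁t ≤ W := by
    rw [hu₁]
    have t1 := FormAux.enorm_sub_le (K₁ *ᵥ x t + K₂ *ᵥ ξ t + K₃ *ᵥ z t)
      ((K₄ * r) • (Bp *ᵥ e t))
    have t2 := FormAux.enorm_add_le (K₁ *ᵥ x t + K₂ *ᵥ ξ t) (K₃ *ᵥ z t)
    have t3 := FormAux.enorm_add_le (K₁ *ᵥ x t) (K₂ *ᵥ ξ t)
    have t4 : vecEnorm ((K₄ * r) • (Bp *ᵥ e t)) = K₄ * vecEnorm (r • (Bp *ᵥ e t)) := by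
      rw [show (K₄ * r) • (Bp *ᵥ e t) = K₄ • (r • (Bp *ᵥ e t)) from (smul_smul _ _ _).symm,
        FormAux.enorm_smul, abs_of_pos hK₄]
    rw [hW]; linarith only [t1, t2, t3, t4]
  have hb5 : s ⬝ᵥ (Mmat t *ᵥ u₁t) ≤ σ * (Mbar * W) := by
    have h1 := FormAux.dot_le s (Mmat t *ᵥ u₁t)
    have h2 : vecEnorm (Mmat t *ᵥ u₁t) ≤ Mbar * W :=
      (FormAux.enorm_mulVec_le _ _).trans
        (mul_le_mul (hMb t) hu₁W (FormAux.enorm_nonneg _) hMbar0)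
    have h3 := mul_le_mul_of_nonneg_left h2 hσpos.le
    linarith only [h1, h3]
  -- the switching term
  set ρtot := ρ₁ + ρ₂ * nx + ρ₃ * ‖F‖ + ρ₄ * W with hρtot
  have hρtot0 : 0 ≤ ρtot := by
    rw [hρtot]
    have q2 := mul_nonneg hρ₂0 hnx0
    have q3 := mul_nonneg hρ₃0 hFnorm
    have q4 := mul_nonneg hρ₄0 hW0
    linarith only [hρ₁0, q2, q3, q4]
  have hcomb : u₂t + u₃t = (-(ρtot) * σ⁻¹) • s := by
    rw [hu₂, hu₃, hρtot]; module
  have hb6 : s ⬝ᵥ (u₂t + u₃t) + s ⬝ᵥ (Mmat t *ᵥ (u₂t + u₃t))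
      ≤ -(ρtot * (1 - Mbar) * σ) := by
    have hss : s ⬝ᵥ s = σ ^ 2 := FormAux.dot_self_eq s
    have h1 : s ⬝ᵥ (u₂t + u₃t) = -(ρtot) * σ⁻¹ * (s ⬝ᵥ s) := by
      rw [hcomb, dotProduct_smul, smul_eq_mul]
    have h2 : s ⬝ᵥ (Mmat t *ᵥ (u₂t + u₃t)) = -(ρtot) * σ⁻¹ * (s ⬝ᵥ (Mmat t *ᵥ s)) := by
      rw [hcomb, Matrix.mulVec_smul, dotProduct_smul, smul_eq_mul]
    have h3 : -(σ * (Mbar * σ)) ≤ s ⬝ᵥ (Mmat t *ᵥ s) := by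
      have h := FormAux.neg_dot_le s (Mmat t *ᵥ s)
      have h4 : vecEnorm (Mmat t *ᵥ s) ≤ Mbar * σ :=
        (FormAux.enorm_mulVec_le _ _).trans (mul_le_mul_of_nonneg_right (hMb t) hσpos.le)
      have h5 := mul_le_mul_of_nonneg_left h4 hσpos.le
      linarith only [h, h5]
    have hσinv0 : 0 ≤ σ⁻¹ := inv_nonneg.mpr hσpos.le
    have hks : σ⁻¹ * σ ^ 2 = σ := by
      rw [sq, ← mul_assoc, inv_mul_cancel₀ hσpos.ne', one_mul]
    rw [h1, h2, hss]
    have hc0 : 0 ≤ ρtot * σ⁻¹ := mul_nonneg hρtot0 hσinv0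
    have h5 := mul_le_mul_of_nonneg_left h3 hc0
    have h6 : ρtot * σ⁻¹ * σ ^ 2 = ρtot * σ := by rw [mul_assoc, hks]
    have h7 : ρtot * σ⁻¹ * (σ * (Mbar * σ)) = ρtot * Mbar * σ := by
      field_simp
    linarith only [h5, h6, h7]
  -- net gain inequality
  have hgain : σ * ((1 + Mbar) * dbar) + σ * (Nbar * nx) + σ * (‖F‖ * ubar) + σ * (Mbar * W)
      ≤ ρtot * (1 - Mbar) * σ := by
    have g2 : Nbar * nx ≤ ρ₂ * (1 - Mbar) * nx := mul_le_mul_of_nonneg_right hρ₂' hnx0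
    have g3 : ubar * ‖F‖ ≤ ρ₃ * (1 - Mbar) * ‖F‖ := mul_le_mul_of_nonneg_right hρ₃' hFnorm
    have g4 : Mbar * W ≤ ρ₄ * (1 - Mbar) * W := mul_le_mul_of_nonneg_right hρ₄' hW0
    have hid : ρtot * (1 - Mbar)
        = ρ₁ * (1 - Mbar) + ρ₂ * (1 - Mbar) * nx + ρ₃ * (1 - Mbar) * ‖F‖
          + ρ₄ * (1 - Mbar) * W := by rw [hρtot]; ring
    have hsum : (1 + Mbar) * dbar + Nbar * nx + ‖F‖ * ubar + Mbar * W
        ≤ ρtot * (1 - Mbar) := by rw [hid]; linarith only [hρ₁', g2, g3, g4]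
    linarith only [mul_le_mul_of_nonneg_left hsum hσpos.le]
  -- Rayleigh bound
  have hray := FormAux.rayleigh hP.1 (e t)
  have hLpos : 0 < ⨆ j, hP.1.eigenvalues j := by
    have h0 := hP.eigenvalues_pos (⟨0, hn⟩ : Fin n)
    exact h0.trans_le (le_ciSup (Set.Finite.bddAbove (Set.finite_range _)) _)
  have hVq : e t ⬝ᵥ (P *ᵥ e t) / (⨆ j, hP.1.eigenvalues j) ≤ e t ⬝ᵥ e t := by
    rw [div_le_iff₀ hLpos]; linarith only [hray]
  have hs2 : 0 ≤ s ⬝ᵥ s := by rw [FormAux.dot_self_eq]; positivity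
  rw [hDval]
  have hdivid : -((1 / 2) * (e t ⬝ᵥ (P *ᵥ e t))) / (⨆ j, hP.1.eigenvalues j)
      = -(1 / 2) * (e t ⬝ᵥ (P *ᵥ e t) / (⨆ j, hP.1.eigenvalues j)) := by ring
  rw [hdivid]
  linarith only [hb2, hb3, hb4, hb5, hb6, hgain, hs2, hVq]
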